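/- Let X be a subshift of Q^M and let κ be a non-negative integer. Then X is κ-step if and only if for every c ∈ Q^M, if c↾_{B(m,κ)} ∈ X_{B(m,κ)} for every m ∈ M, then c ∈ X. -/

import Mathlib

open Filter Set

namespace GoE

variable {G M Q : Type*}

/-- A left homogeneous space `⟨M, G, ▷⟩` together with a coordinate system
`⟨m₀, (g_{m₀,m})_{m∈M}⟩`: a cell space with finite stabiliser `G₀` of `m₀`. -/
structure CellSpace (G M : Type*) [Group G] where
  act : G → M → M
  one_act : ∀ m : M, act 1 m = m
  mul_act : ∀ (g h : G) (m : M), act (g * h) m = act g (act h m)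
  transitive : ∀ m m' : M, ∃ g : G, act g m = m'
  m0 : M
  coord : M → G
  coord_act : ∀ m : M, act (coord m) m0 = m
  stab_finite : {g : G | act g m0 = m0}.Finite

variable [Group G]

namespace CellSpace

/-- Membership in the stabiliser `G₀` of `m₀`. -/
def stab (R : CellSpace G M) (g : G) : Prop := R.act g R.m0 = R.m0

/-- The induced right semi-action `m ↝ gG₀ = g_{m₀,m} g ▷ m₀`, on representatives. -/
def sAct (R : CellSpace G M) (m : M) (g : G) : M := R.act (R.coord m * g) R.m0

/-- `m ↝ ι n` where `ι : M → G/G₀`, `n ↦ G_{m₀,n}` is the canonical identification. -/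
def nAct (R : CellSpace G M) (m n : M) : M := R.act (R.coord m * R.coord n) R.m0

/-- `S ⊆ G` represents a finite symmetric right generating set of cosets
(`G₀ · S ⊆ S`, `S⁻¹ ⊆ S`, and `S` generates). -/
structure IsRightGenSet (R : CellSpace G M) (S : Set G) : Prop where
  finite : S.Finite
  saturated : ∀ s ∈ S, ∀ g₀ : G, R.stab g₀ → s * g₀ ∈ S
  stab_mul : ∀ g₀ : G, R.stab g₀ → ∀ s ∈ S, g₀ * s ∈ S
  symm : ∀ s ∈ S, s⁻¹ ∈ S
  generates : ∀ m : M, ∃ (k : ℕ) (f : ℕ → M), f 0 = R.m0 ∧ f k = m ∧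
    ∀ i < k, ∃ s ∈ S, f (i + 1) = R.sAct (f i) s

/-- There is an `S`-path of length `n` from `m` to `m'` in the `S`-Cayley graph. -/
def Chain (R : CellSpace G M) (S : Set G) (m m' : M) (n : ℕ) : Prop :=
  ∃ f : ℕ → M, f 0 = m ∧ f n = m' ∧ ∀ i < n, ∃ s ∈ S, f (i + 1) = R.sAct (f i) s

/-- The `S`-metric `d`. -/
noncomputable def dist (R : CellSpace G M) (S : Set G) (m m' : M) : ℕ :=
  sInf {n : ℕ | R.Chain S m m' n}

/-- The ball `B(m, ρ)` of radius `ρ` centred at `m`. -/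
noncomputable def ball (R : CellSpace G M) (S : Set G) (m : M) (ρ : ℕ) : Set M :=
  {m' : M | R.dist S m m' ≤ ρ}

/-- The `θ`-interior `A^{-θ}` of `A`. -/
noncomputable def inter (R : CellSpace G M) (S : Set G) (A : Set M) (θ : ℕ) : Set M :=
  {m ∈ A | R.ball S m θ ⊆ A}

/-- The `θ`-closure `A^{+θ}` of `A`. -/
noncomputable def clos (R : CellSpace G M) (S : Set G) (A : Set M) (θ : ℕ) : Set M :=
  {m : M | (R.ball S m θ ∩ A).Nonempty}

/-- The external `θ`-boundary `∂θ⁺A = A^{+θ} ∖ A`. -/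
noncomputable def extB (R : CellSpace G M) (S : Set G) (A : Set M) (θ : ℕ) : Set M :=
  R.clos S A θ \ A

/-- The internal `θ`-boundary `∂θ⁻A = A ∖ A^{-θ}`. -/
noncomputable def intB (R : CellSpace G M) (S : Set G) (A : Set M) (θ : ℕ) : Set M :=
  A \ R.inter S A θ

/-- The `θ`-boundary `∂θA = A^{+θ} ∖ A^{-θ}`. -/
noncomputable def bdry (R : CellSpace G M) (S : Set G) (A : Set M) (θ : ℕ) : Set M :=
  R.clos S A θ \ R.inter S A θ

end CellSpace

/-- The set `X_A` of restrictions to `A` of the elements of `X`. -/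
def restr (A : Set M) (X : Set (M → Q)) : Set (A → Q) :=
  (fun x : M → Q => A.restrict x) '' X

/-- The pattern `p` (with domain `A`) semi-occurs in the configuration `c`:
there is `h ∈ H` with `h ⊛ p = c↾_{h ▷ dom p}`. -/
def SemiOccurs (R : CellSpace G M) (H : Subgroup G) {A : Set M} (p : A → Q)
    (c : M → Q) : Prop :=
  ∃ h ∈ H, ∀ a : A, c (R.act h ↑a) = p a

/-- The pattern `p` (with domain `A`) occurs at `t` in the configuration `c`:
`t ⊛' p = c↾_{t ↝ A}`. -/
def OccursAt (R : CellSpace G M) {A : Set M} (p : A → Q) (t : M) (c : M → Q) : Prop :=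
  ∀ a : A, c (R.nAct t ↑a) = p a

/-- The pattern `p` is allowed in `X`: it semi-occurs in some point of `X`. -/
def Allowed (R : CellSpace G M) (H : Subgroup G) (X : Set (M → Q)) {A : Set M}
    (p : A → Q) : Prop :=
  ∃ x ∈ X, SemiOccurs R H p x

/-- The set `⟨𝔉⟩` generated by a set `𝔉` of forbidden patterns. -/
def Generated (R : CellSpace G M) (H : Subgroup G) (𝔉 : Set (Σ A : Set M, A → Q)) :
    Set (M → Q) :=
  {c : M → Q | ∀ f ∈ 𝔉, ¬ SemiOccurs R H f.2 c}

/-- `X` is a subshift of `Q^M`: it is generated by a set of blocks. -/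
def IsSubshift (R : CellSpace G M) (H : Subgroup G) (X : Set (M → Q)) : Prop :=
  ∃ 𝔉 : Set (Σ A : Set M, A → Q), (∀ f ∈ 𝔉, f.1.Finite) ∧ X = Generated R H 𝔉

/-- `X` is a subshift of finite type: it is generated by a finite set of blocks. -/
def IsSubshiftFT (R : CellSpace G M) (H : Subgroup G) (X : Set (M → Q)) : Prop :=
  ∃ 𝔉 : Set (Σ A : Set M, A → Q), 𝔉.Finite ∧ (∀ f ∈ 𝔉, f.1.Finite) ∧
    X = Generated R H 𝔉

/-- `X` is a `κ`-step subshift: it is generated by a set of `B(κ)`-blocks. -/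
def IsStep (R : CellSpace G M) (S : Set G) (H : Subgroup G) (X : Set (M → Q))
    (κ : ℕ) : Prop :=
  ∃ 𝔉 : Set (Σ A : Set M, A → Q), (∀ f ∈ 𝔉, f.1 = R.ball S R.m0 κ) ∧
    X = Generated R H 𝔉

/-- `X` is `κ`-strongly irreducible. -/
def IsStronglyIrr (R : CellSpace G M) (S : Set G) (H : Subgroup G)
    (X : Set (M → Q)) (κ : ℕ) : Prop :=
  ∀ (A B : Set M), A.Finite → B.Finite → ∀ (p : A → Q) (p' : B → Q),
    Allowed R H X p → Allowed R H X p' →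
    (∀ a ∈ A, ∀ b ∈ B, κ + 1 ≤ R.dist S a b) →
    ∃ x ∈ X, A.restrict x = p ∧ B.restrict x = p'

/-- `X` has `ρ`-bounded propagation. -/
def HasBoundedProp (R : CellSpace G M) (S : Set G) (X : Set (M → Q)) (ρ : ℕ) : Prop :=
  ∀ F : Set M, F.Finite → ∀ p : F → Q,
    (∀ f ∈ F, ∃ x ∈ X, ∀ (m : M) (hm : m ∈ R.ball S f ρ ∩ F), p ⟨m, hm.2⟩ = x m) →
    ∃ x ∈ X, F.restrict x = p

/-- `Δ` is a `κ`-local map from `X` to `Y`. -/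
def IsLocalMap (R : CellSpace G M) (S : Set G) (H : Subgroup G)
    (X Y : Set (M → Q)) (Δ : (M → Q) → (M → Q)) (κ : ℕ) : Prop :=
  Set.MapsTo Δ X Y ∧
  ∃ N : Set M, N ⊆ R.ball S R.m0 κ ∧
    (∀ g₀ : G, R.stab g₀ → ∀ n ∈ N, R.act g₀ n ∈ N) ∧
    ∃ δ : (N → Q) → Q,
      (∀ h₀ ∈ H, R.stab h₀ →
        ∀ ℓ ∈ restr N X, ∀ ℓ' : N → Q,
          (∀ (n : M) (hn : n ∈ N) (hn' : R.act h₀⁻¹ n ∈ N),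
            ℓ' ⟨n, hn⟩ = ℓ ⟨R.act h₀⁻¹ n, hn'⟩) →
          δ ℓ' = δ ℓ) ∧
      ∀ x ∈ X, ∀ m : M, Δ x m = δ (fun n : N => x (R.nAct m ↑n))

/-- `Δ` is pre-injective on `X`. -/
def PreInjective (X : Set (M → Q)) (Δ : (M → Q) → (M → Q)) : Prop :=
  ∀ x ∈ X, ∀ x' ∈ X, Δ x = Δ x' → {m : M | x m ≠ x' m}.Finite → x = x'

/-- The cell space `R` is right amenable: there is a finitely additive probability
measure on the power set of `M` that is semi-invariant under the right semi-action. -/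
def RightAmenable (R : CellSpace G M) : Prop :=
  ∃ μ : Set M → ℝ, (∀ A : Set M, 0 ≤ μ A) ∧ μ Set.univ = 1 ∧
    (∀ A B : Set M, Disjoint A B → μ (A ∪ B) = μ A + μ B) ∧
    ∀ (g : G) (A : Set M), Set.InjOn (fun m => R.sAct m g) A →
      μ ((fun m => R.sAct m g) '' A) = μ A

/-- `F` is a right Følner net in `R` (indexed by the directed set `I`). -/
def IsFolnerNet (R : CellSpace G M) (S : Set G) {I : Type*} [Preorder I]
    (F : I → Set M) : Prop :=
  (∀ i, (F i).Nonempty) ∧ (∀ i, (F i).Finite) ∧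
  ∀ ρ : ℕ, Tendsto (fun i => ((R.bdry S (F i) ρ).ncard : ℝ) / ((F i).ncard : ℝ))
    atTop (nhds 0)

/-- The entropy of `X ⊆ Q^M` with respect to the net `F`:
`limsup_i log|X_{F_i}| / |F_i|`. -/
noncomputable def entropy (R : CellSpace G M) (S : Set G) {I : Type*} [Preorder I]
    (F : I → Set M) (X : Set (M → Q)) : ℝ :=
  limsup (fun i => Real.log ((restr (F i) X).ncard : ℝ) / ((F i).ncard : ℝ)) atTop

/-- `T` is a `⟨θ, κ, θ'⟩`-tiling of `R`. -/
def IsTiling (R : CellSpace G M) (S : Set G) (θ κ θ' : ℕ) (T : Set M) : Prop :=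
  (∀ t ∈ T, ∀ t' ∈ T, t ≠ t' →
    ∀ a ∈ R.ball S t θ, ∀ b ∈ R.ball S t' θ, κ + 1 ≤ R.dist S a b) ∧
  ∀ m : M, ∃ t ∈ T, m ∈ R.ball S t θ'

/-- The action `h ⊛ c` of `h ∈ G` on configurations: `(h ⊛ c)(m) = c(h⁻¹ ▷ m)`. -/
def shiftAct (R : CellSpace G M) (h : G) (c : M → Q) : M → Q :=
  fun m => c (R.act h⁻¹ m)

section Aux

variable (R : CellSpace G M)

lemma act_coord_inv (m : M) : R.act (R.coord m)⁻¹ m = R.m0 := by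
  nth_rewrite 2 [← R.coord_act m]
  rw [← R.mul_act, inv_mul_cancel, R.one_act]

lemma act_sAct (g : G) (m : M) (s : G) :
    ∃ g₀, R.stab g₀ ∧ R.act g (R.sAct m s) = R.sAct (R.act g m) (g₀ * s) := by
  refine ⟨(R.coord (R.act g m))⁻¹ * (g * R.coord m), ?_, ?_⟩
  · show R.act _ R.m0 = R.m0
    rw [R.mul_act, R.mul_act, R.coord_act]
    exact act_coord_inv R _
  · show R.act g (R.act (R.coord m * s) R.m0) =
      R.act (R.coord (R.act g m) * ((R.coord (R.act g m))⁻¹ * (g * R.coord m) * s)) R.m0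
    rw [← R.mul_act]
    congr 1
    group

lemma chain_map {S : Set G} (hS : R.IsRightGenSet S) (g : G) {m m' : M} {n : ℕ}
    (h : R.Chain S m m' n) : R.Chain S (R.act g m) (R.act g m') n := by
  obtain ⟨f, h0, hn, hstep⟩ := h
  refine ⟨fun i => R.act g (f i), by simp only [h0], by simp only [hn], fun i hi => ?_⟩
  obtain ⟨s, hs, heq⟩ := hstep i hi
  obtain ⟨g₀, hg₀, hact⟩ := act_sAct R g (f i) s
  exact ⟨g₀ * s, hS.stab_mul g₀ hg₀ s hs, by show R.act g (f (i+1)) = _; rw [heq, hact]⟩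

lemma dist_act {S : Set G} (hS : R.IsRightGenSet S) (g : G) (m m' : M) :
    R.dist S (R.act g m) (R.act g m') = R.dist S m m' := by
  unfold CellSpace.dist
  congr 1
  ext n
  constructor
  · intro h
    have := chain_map R hS g⁻¹ h
    rwa [← R.mul_act, ← R.mul_act, inv_mul_cancel, R.one_act, R.one_act] at this
  · exact chain_map R hS g

lemma ball_act {S : Set G} (hS : R.IsRightGenSet S) (g : G) {m m' : M} {ρ : ℕ}
    (h : m' ∈ R.ball S m ρ) : R.act g m' ∈ R.ball S (R.act g m) ρ := by
  show R.dist S _ _ ≤ ρ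
  rwa [dist_act R hS]

lemma generated_shift (H : Subgroup G) (𝔉 : Set (Σ A : Set M, A → Q)) {h : G}
    (hh : h ∈ H) {c : M → Q} (hc : c ∈ Generated R H 𝔉) :
    shiftAct R h c ∈ Generated R H 𝔉 := by
  intro f hf ⟨h', hh', hocc⟩
  refine hc f hf ⟨h⁻¹ * h', mul_mem (inv_mem hh) hh', fun a => ?_⟩
  have := hocc a
  rw [R.mul_act]
  exact this

lemma mem_X_shift {H : Subgroup G} {X : Set (M → Q)} (hX : IsSubshift R H X)
    {h : G} (hh : h ∈ H) {x : M → Q} (hx : x ∈ X) : shiftAct R h x ∈ X := by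
  obtain ⟨𝔉, -, rfl⟩ := hX
  exact generated_shift R H 𝔉 hh hx

end Aux

theorem stmt3
    [Finite Q] (R : CellSpace G M) (S : Set G) (hS : R.IsRightGenSet S)
    (H : Subgroup G) (hH : ∀ m : M, R.coord m ∈ H)
    (X : Set (M → Q)) (hX : IsSubshift R H X) (κ : ℕ) :
    IsStep R S H X κ ↔
      ∀ c : M → Q,
        (∀ m : M, Set.restrict (R.ball S m κ) c ∈ restr (R.ball S m κ) X) →
        c ∈ X := by
  constructor
  · -- forward: κ-step implies local-to-global
    rintro ⟨𝔉, hdom, rfl⟩ c hc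
    rintro ⟨A, p⟩ hf ⟨h, hhH, hocc⟩
    have hA : A = R.ball S R.m0 κ := hdom _ hf
    subst hA
    obtain ⟨x, hx, heq⟩ := hc (R.act h R.m0)
    refine hx ⟨_, p⟩ hf ⟨h, hhH, fun a => ?_⟩
    have hmem : R.act h ↑a ∈ R.ball S (R.act h R.m0) κ := ball_act R hS h a.2
    have h1 := congrFun heq ⟨R.act h ↑a, hmem⟩
    simp only [Set.restrict_apply] at h1
    rw [show x (R.act h ↑a) = c (R.act h ↑a) from h1]
    exact hocc a
  · -- backward
    intro hloc
    set B := R.ball S R.m0 κ with hB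
    refine ⟨Sigma.mk B '' {p : B → Q | p ∉ restr B X}, ?_, ?_⟩
    · rintro f ⟨p, hp, rfl⟩; rfl
    · apply Set.Subset.antisymm
      · -- X ⊆ Generated
        rintro x hx f ⟨p, hp, rfl⟩ ⟨h, hhH, hocc⟩
        refine hp ⟨shiftAct R h⁻¹ x, mem_X_shift R hX (inv_mem hhH) hx, ?_⟩
        funext a
        have := hocc a
        show x (R.act h⁻¹⁻¹ ↑a) = p a
        rw [inv_inv]
        exact this
      · -- Generated ⊆ X
        intro c hc
        apply hloc c
        intro m
        set h := R.coord m with hh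
        set p : B → Q := fun a => c (R.act h ↑a) with hp
        have hpocc : SemiOccurs R H p c := ⟨h, hH m, fun a => rfl⟩
        have hpX : p ∈ restr B X := by
          by_contra hcon
          exact hc ⟨B, p⟩ ⟨p, hcon, rfl⟩ hpocc
        obtain ⟨x, hx, hxp⟩ := hpX
        refine ⟨shiftAct R h x, mem_X_shift R hX (hH m) hx, ?_⟩
        funext m'
        obtain ⟨m', hm'⟩ := m'
        have hm0 : R.act h⁻¹ m = R.m0 := act_coord_inv R m
        have hmem : R.act h⁻¹ m' ∈ B := by
          rw [hB, ← hm0]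
          exact ball_act R hS h⁻¹ hm'
        have h1 := congrFun hxp ⟨R.act h⁻¹ m', hmem⟩
        simp only [Set.restrict_apply] at h1
        simp only [Set.restrict_apply, shiftAct]
        show x (R.act h⁻¹ m') = c m'
        rw [show x (R.act h⁻¹ m') = p ⟨R.act h⁻¹ m', hmem⟩ from h1]
        show c (R.act h (R.act h⁻¹ m')) = c m'
        rw [← R.mul_act, mul_inv_cancel, R.one_act]

end GoE
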